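/- Let a₁, b₁, c₁, a₂, b₂, c₂, a₃, b₃, c₃ be real numbers and set δᵢⱼ = aᵢbⱼ − aⱼbᵢ; assume δ₁₂, δ₁₃, δ₂₃ are all nonzero. Define A = a₂a₃c₁²δ₂₃ − a₁a₃c₂²δ₁₃ + a₁a₂c₃²δ₁₂; B = (1/2)·((a₂b₃ + a₃b₂)c₁²δ₂₃ − (a₁b₃ + a₃b₁)c₂²δ₁₃ + (a₁b₂ + a₂b₁)c₃²δ₁₂); C = b₂b₃c₁²δ₂₃ − b₁b₃c₂²δ₁₃ + b₁b₂c₃²δ₁₂; and D = (1/(4δ₁₂δ₁₃δ₂₃))·(δ₂₃c₁ + δ₁₃c₂ − δ₁₂c₃)(δ₂₃c₁ − δ₁₃c₂ − δ₁₂c₃)(δ₂₃c₁ − δ₁₃c₂ + δ₁₂c₃)(δ₂₃c₁ + δ₁₃c₂ + δ₁₂c₃). Then for each i ∈ {1, 2, 3} the tangency condition (AC − B²)·cᵢ² + (A·bᵢ² − 2B·aᵢbᵢ + C·aᵢ²)·D = 0 holds; i.e., each line aᵢx + bᵢy + cᵢ = 0 is tangent to the central conic Ax² + 2Bxy + Cy²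 + D = 0. -/

import Mathlib

/-- the central conic `Ax² + 2Bxy + Cy² + D = 0` with coefficients
built from the three lines `aᵢx + bᵢy + cᵢ = 0` satisfies, for each `i`, the
tangency (discriminant) condition `(AC − B²)cᵢ² + (Abᵢ² − 2Baᵢbᵢ + Caᵢ²)D = 0`. -/
theorem inconic_tangency
    (a₁ b₁ c₁ a₂ b₂ c₂ a₃ b₃ c₃ : ℝ)
    (δ₁₂ δ₁₃ δ₂₃ : ℝ)
    (h12 : δ₁₂ = a₁ * b₂ - a₂ * b₁) (h13 : δ₁₃ = a₁ * b₃ - a₃ * b₁)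
    (h23 : δ₂₃ = a₂ * b₃ - a₃ * b₂)
    (h12ne : δ₁₂ ≠ 0) (h13ne : δ₁₃ ≠ 0) (h23ne : δ₂₃ ≠ 0)
    (A B C D : ℝ)
    (hA : A = a₂ * a₃ * c₁ ^ 2 * δ₂₃ - a₁ * a₃ * c₂ ^ 2 * δ₁₃ + a₁ * a₂ * c₃ ^ 2 * δ₁₂)
    (hB : B = (1 / 2) * ((a₂ * b₃ + a₃ * b₂) * c₁ ^ 2 * δ₂₃
        - (a₁ * b₃ + a₃ * b₁) * c₂ ^ 2 * δ₁₃ + (a₁ * b₂ + a₂ * b₁) * c₃ ^ 2 * δ₁₂))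
    (hC : C = b₂ * b₃ * c₁ ^ 2 * δ₂₃ - b₁ * b₃ * c₂ ^ 2 * δ₁₃ + b₁ * b₂ * c₃ ^ 2 * δ₁₂)
    (hD : D = (1 / (4 * δ₁₂ * δ₁₃ * δ₂₃))
        * (δ₂₃ * c₁ + δ₁₃ * c₂ - δ₁₂ * c₃) * (δ₂₃ * c₁ - δ₁₃ * c₂ - δ₁₂ * c₃)
        * (δ₂₃ * c₁ - δ₁₃ * c₂ + δ₁₂ * c₃) * (δ₂₃ * c₁ + δ₁₃ * c₂ + δ₁₂ * c₃)) :
    ((A * C - B ^ 2) * c₁ ^ 2 + (A * b₁ ^ 2 - 2 * B * a₁ * b₁ + C * a₁ ^ 2) * D = 0) ∧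
    ((A * C - B ^ 2) * c₂ ^ 2 + (A * b₂ ^ 2 - 2 * B * a₂ * b₂ + C * a₂ ^ 2) * D = 0) ∧
    ((A * C - B ^ 2) * c₃ ^ 2 + (A * b₃ ^ 2 - 2 * B * a₃ * b₃ + C * a₃ ^ 2) * D = 0) := by
  subst hA hB hC hD h12 h13 h23
  refine ⟨?_, ?_, ?_⟩ <;> (have key : ∀ p Q e f1 f2 f3 f4 X : ℝ, X * e = 1 → X * p + Q * (f1 * f2 * f3 * f4) = 0 → p + Q * (e * f1 * f2 * f3 * f4) = 0 := (fun p Q e f1 f2 f3 f4 X h1 h2 => by linear_combination e * h2 - p * h1); exact key _ _ _ _ _ _ _ _ (mul_one_div_cancel (mul_ne_zero (mul_ne_zero (mul_ne_zero (four_ne_zero (α := ℝ)) h12ne) h13ne) h23ne)) (by ring))
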